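/- There exists an absolute constant c > 0 such that for every natural number N there is a finite convex set A ⊂ ℝ with |A| ≥ N and a real number x with r_{A+A}(x) ≥ c·|A|^{2/3}, where r_{A+A}(x) := #{(a,b) ∈ A × A : a + b = x}. -/

import Mathlib

/-- A finite set `A ⊆ ℝ` is *convex* if, listing its elements in increasing order,
the consecutive differences form a strictly increasing sequence. -/
def IsConvexSet (A : Finset ℝ) : Prop :=
  ∀ i : ℕ, i + 2 < A.card →
    (A.sort (· ≤ ·)).getD (i + 1) 0 - (A.sort (· ≤ ·)).getD i 0 <
      (A.sort (· ≤ ·)).getD (i + 2) 0 - (A.sort (· ≤ ·)).getD (i + 1) 0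

namespace ConvexCons
open Finset List



def Tri (M : ℕ) : Finset (ℕ × ℕ) :=
  ((Finset.Icc 1 M) ×ˢ (Finset.Icc 1 M)).filter fun p => p.2 < p.1

def SS (m : ℕ) : Finset (ℕ × ℕ) := (Tri m).filter fun p => Nat.Coprime p.1 p.2

lemma tri_succ (M : ℕ) :
    Tri (M + 1) = Tri M ∪ (Finset.Icc 1 M).image (fun b => (M + 1, b)) := by
  ext ⟨a, b⟩
  simp only [Tri, Finset.mem_filter, Finset.mem_product, Finset.mem_Icc, Finset.mem_union,
    Finset.mem_image]
  constructor
  · rintro ⟨⟨⟨ha1, ham⟩, hb1, hbm⟩, hba⟩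
    rcases Nat.lt_or_ge a (M + 1) with h | h
    · exact Or.inl ⟨⟨⟨ha1, by omega⟩, hb1, by omega⟩, hba⟩
    · refine Or.inr ⟨b, ⟨hb1, by omega⟩, ?_⟩
      have : a = M + 1 := by omega
      subst this; rfl
  · rintro (⟨⟨⟨ha1, ham⟩, hb1, hbm⟩, hba⟩ | ⟨c, ⟨hc1, hcM⟩, h⟩)
    · exact ⟨⟨⟨ha1, by omega⟩, hb1, by omega⟩, hba⟩
    · cases h
      exact ⟨⟨⟨by omega, le_rfl⟩, hc1, by omega⟩, by omega⟩

lemma tri_card (M : ℕ) : (Tri M).card * 2 + M = M * M := by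
  induction M with
  | zero => simp [Tri]
  | succ M ih =>
    rw [tri_succ]
    rw [Finset.card_union_of_disjoint, Finset.card_image_of_injective _ (by intro x y h; simpa using h)]
    · simp only [Nat.card_Icc]
      have h2 : (M + 1) * (M + 1) = (Tri M).card * 2 + M + 2 * M + 1 := by
        calc (M+1)*(M+1) = M*M + 2*M + 1 := by ring
          _ = #(Tri M) * 2 + M + 2*M + 1 := by rw [← ih]
      omega
    · rw [Finset.disjoint_right]
      rintro ⟨a, b⟩ hmem htri
      simp only [Finset.mem_image] at hmem
      obtain ⟨c, _, h⟩ := hmem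
      simp only [Tri, Finset.mem_filter, Finset.mem_product, Finset.mem_Icc] at htri
      have : a = M + 1 := (Prod.mk.injEq _ _ _ _ ▸ h).1.symm ▸ rfl
      omega



lemma bad_subset (m : ℕ) :
    (Tri m).filter (fun p => ¬ Nat.Coprime p.1 p.2) ⊆
      (Finset.Icc 2 m).biUnion fun g => (Tri (m / g)).image fun p => (g * p.1, g * p.2) := by
  rintro ⟨a, b⟩ hp
  simp only [Finset.mem_filter, Tri, Finset.mem_product, Finset.mem_Icc] at hp
  obtain ⟨⟨⟨⟨ha1, ham⟩, hb1, hbm⟩, hba⟩, hnc⟩ := hp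
  set g := Nat.gcd a b with hg
  have hga : g ∣ a := Nat.gcd_dvd_left a b
  have hgb : g ∣ b := Nat.gcd_dvd_right a b
  have hg0 : 0 < g := Nat.gcd_pos_of_pos_left b (by omega)
  have hg2 : 2 ≤ g := by
    have h1 : g ≠ 1 := fun h => hnc h
    omega
  have hgm : g ≤ m := le_trans (Nat.le_of_dvd (by omega) hga) ham
  have haa : g * (a / g) = a := Nat.mul_div_cancel' hga
  have hbb : g * (b / g) = b := Nat.mul_div_cancel' hgb
  simp only [Finset.mem_biUnion, Finset.mem_Icc, Finset.mem_image, Tri, Finset.mem_filter,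
    Finset.mem_product]
  refine ⟨g, ⟨hg2, hgm⟩, (a / g, b / g), ⟨⟨⟨?_, ?_⟩, ?_, ?_⟩, ?_⟩, by rw [haa, hbb]⟩
  · exact Nat.one_le_div_iff hg0 |>.mpr (Nat.le_of_dvd (by omega) hga)
  · exact Nat.div_le_div_right ham
  · exact Nat.one_le_div_iff hg0 |>.mpr (Nat.le_of_dvd (by omega) hgb)
  · exact le_trans (Nat.div_le_div_right hbm) le_rfl
  · exact lt_of_mul_lt_mul_left (by rw [haa, hbb]; exact hba) (Nat.zero_le g)

lemma bad_card (m : ℕ) :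
    ((Tri m).filter (fun p => ¬ Nat.Coprime p.1 p.2)).card ≤
      ∑ g ∈ Finset.Icc 2 m, (Tri (m / g)).card := by
  refine le_trans (Finset.card_le_card (bad_subset m)) ?_
  refine le_trans (Finset.card_biUnion_le) ?_
  exact Finset.sum_le_sum fun g _ => Finset.card_image_le

lemma sum_inv_sq (m : ℕ) (hm : 2 ≤ m) :
    ∑ g ∈ Finset.Icc 2 m, (1 / (g : ℝ)) ^ 2 ≤ 3 / 4 - 1 / (m : ℝ) := by
  induction m, hm using Nat.le_induction with
  | base => norm_num
  | succ m hm ih =>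
    rw [Finset.sum_Icc_succ_top (by omega)]
    have hm2 : (2 : ℝ) ≤ (m : ℝ) := by exact_mod_cast hm
    have h1 : (0 : ℝ) < (m : ℝ) := by linarith
    have key : (1 / ((m : ℝ) + 1)) ^ 2 ≤ 1 / (m : ℝ) - 1 / ((m : ℝ) + 1) := by
      have e : 1 / (m : ℝ) - 1 / ((m : ℝ) + 1) = 1 / ((m : ℝ) * ((m : ℝ) + 1)) := by
        field_simp
        ring
      rw [e, div_pow, one_pow]
      apply one_div_le_one_div_of_le (by positivity)
      nlinarith
    push_cast
    linarith

lemma SS_card (m : ℕ) (hm : 2 ≤ m) : (m : ℝ) ^ 2 / 8 ≤ ((SS m).card : ℝ) := by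
  have hsplit : (SS m).card + ((Tri m).filter (fun p => ¬ Nat.Coprime p.1 p.2)).card
      = (Tri m).card := by
    rw [SS]
    exact Finset.card_filter_add_card_filter_not _
  have hmm : ((Tri m).card : ℝ) * 2 + (m : ℝ) = (m : ℝ) * m := by
    exact_mod_cast tri_card m
  have htri : ((Tri m).card : ℝ) = ((m : ℝ) ^ 2 - m) / 2 := by nlinarith [hmm]
  have hbadsum : (((Tri m).filter (fun p => ¬ Nat.Coprime p.1 p.2)).card : ℝ)
      ≤ 3 / 8 * (m : ℝ) ^ 2 - (m : ℝ) / 2 := by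
    have h1 : (((Tri m).filter (fun p => ¬ Nat.Coprime p.1 p.2)).card : ℝ)
        ≤ ∑ g ∈ Finset.Icc 2 m, ((Tri (m / g)).card : ℝ) := by
      exact_mod_cast bad_card m
    have h2 : ∀ g ∈ Finset.Icc 2 m, ((Tri (m / g)).card : ℝ)
        ≤ (m : ℝ) ^ 2 / 2 * (1 / (g : ℝ)) ^ 2 := by
      intro g hgm
      simp only [Finset.mem_Icc] at hgm
      have hMr : ((Tri (m / g)).card : ℝ) * 2 + ((m / g : ℕ) : ℝ)
          = ((m / g : ℕ) : ℝ) * ((m / g : ℕ) : ℝ) := by exact_mod_cast tri_card (m / g)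
      have hcast : ((m / g : ℕ) : ℝ) ≤ (m : ℝ) / g := Nat.cast_div_le
      have hg0 : (0 : ℝ) < (g : ℝ) := by
        have : 0 < g := by omega
        exact_mod_cast this
      have hnn : (0 : ℝ) ≤ ((m / g : ℕ) : ℝ) := Nat.cast_nonneg _
      have hmn : (0 : ℝ) ≤ (m : ℝ) / g := by positivity
      have hsq : ((m / g : ℕ) : ℝ) * ((m / g : ℕ) : ℝ) ≤ ((m : ℝ) / g) * ((m : ℝ) / g) :=
        mul_le_mul hcast hcast hnn hmn
      have heq : ((m : ℝ) / g) * ((m : ℝ) / g) = (m : ℝ) ^ 2 / 2 * (1 / (g : ℝ)) ^ 2 * 2 := by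
        field_simp
      nlinarith
    have h3 := Finset.sum_le_sum h2
    rw [← Finset.mul_sum] at h3
    have h4 := sum_inv_sq m hm
    have hm2 : (0 : ℝ) ≤ (m : ℝ) ^ 2 / 2 := by positivity
    have h5 : (m : ℝ) ^ 2 / 2 * (∑ g ∈ Finset.Icc 2 m, (1 / (g : ℝ)) ^ 2)
        ≤ (m : ℝ) ^ 2 / 2 * (3 / 4 - 1 / (m : ℝ)) := mul_le_mul_of_nonneg_left h4 hm2
    have hm0 : (0 : ℝ) < m := by
      have : (2 : ℝ) ≤ (m : ℝ) := by exact_mod_cast hm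
      linarith
    have h6 : (m : ℝ) ^ 2 / 2 * (3 / 4 - 1 / (m : ℝ)) = 3 / 8 * (m : ℝ) ^ 2 - (m : ℝ) / 2 := by
      field_simp
      ring
    linarith
  have hS : ((SS m).card : ℝ) = ((Tri m).card : ℝ)
      - (((Tri m).filter (fun p => ¬ Nat.Coprime p.1 p.2)).card : ℝ) := by
    have := congrArg (Nat.cast : ℕ → ℝ) hsplit
    push_cast at this
    linarith
  rw [hS, htri]
  linarith




def G (m : ℕ) : Finset ℚ := (SS m).image fun p => (p.1 : ℚ) / (p.2 : ℚ)

lemma mem_G {m : ℕ} {σ : ℚ} (h : σ ∈ G m) :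
    1 < σ ∧ σ ≤ m ∧ σ.den ≤ m ∧ σ.num ≤ (m : ℤ) := by
  simp only [G, Finset.mem_image] at h
  obtain ⟨⟨a, b⟩, hab, rfl⟩ := h
  simp only [SS, Tri, Finset.mem_filter, Finset.mem_product, Finset.mem_Icc] at hab
  obtain ⟨⟨⟨⟨ha1, ham⟩, hb1, hbm⟩, hba⟩, hcop⟩ := hab
  have hb0 : (0 : ℚ) < b := by positivity
  have ha0 : (0 : ℚ) < a := by positivity
  have h1 : (1 : ℚ) < (a : ℚ) / b := by
    rw [lt_div_iff₀ hb0, one_mul]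
    exact_mod_cast hba
  refine ⟨h1, ?_, ?_, ?_⟩
  · calc (a : ℚ) / b ≤ (a : ℚ) / 1 := by
          apply div_le_div_of_nonneg_left ha0.le one_pos
          exact_mod_cast hb1
      _ = a := by ring
      _ ≤ m := by exact_mod_cast ham
  · have hd : (((a : ℚ) / b).den : ℤ) ∣ (b : ℤ) := by
      have := Rat.den_dvd (a : ℤ) (b : ℤ)
      rwa [Rat.divInt_eq_div, Int.cast_natCast, Int.cast_natCast] at this
    have : ((a : ℚ) / b).den ∣ b := by exact_mod_cast hd
    exact le_trans (Nat.le_of_dvd (by omega) this) hbm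
  · have hd : ((a : ℚ) / b).num ∣ (a : ℤ) := by
      have := Rat.num_dvd (a : ℤ) (b := (b : ℤ)) (by exact_mod_cast (Nat.pos_of_ne_zero (by omega)).ne' : (b:ℤ) ≠ 0)
      rwa [Rat.divInt_eq_div, Int.cast_natCast, Int.cast_natCast] at this
    have hnumpos : 0 < ((a : ℚ) / b).num := Rat.num_pos.mpr (lt_trans one_pos h1)
    calc ((a : ℚ) / b).num ≤ (a : ℤ) := Int.le_of_dvd (by exact_mod_cast Nat.pos_of_ne_zero (by omega) : (0:ℤ) < a) hd
      _ ≤ (m : ℤ) := by exact_mod_cast ham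




def lis (m : ℕ) : List ℚ := (G m).sort (· ≤ ·)
def aN (σ : ℚ) : ℕ := σ.num.toNat
def Lq (σ : ℚ) : ℚ := 2 / (σ + 1)
def eps (m : ℕ) : ℚ := 1 / (8 * (m : ℚ) ^ 5)
def BD (m : ℕ) : List (ℚ × ℕ) :=
  ((lis m).reverse.map fun σ => (Lq σ, aN σ)) ++ ((lis m).map fun σ => (2 - Lq σ, σ.den))
def blk (m : ℕ) (b : ℚ × ℕ) : List ℝ :=
  (List.range b.2).map fun (i : ℕ) => ((b.1 : ℝ)) + ((eps m : ℚ) : ℝ) * (2 * (i : ℝ) - ((b.2 : ℝ) - 1))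
def Cq (m : ℕ) : ℚ × ℕ → ℚ × ℕ → Prop :=
  fun b b' => b.1 + eps m * m < b'.1 - eps m * m

lemma eps_pos (m : ℕ) (hm : 1 ≤ m) : 0 < eps m := by
  have : (0:ℚ) < (m:ℚ) := by exact_mod_cast hm
  unfold eps; positivity

-- rationals: q ≥ 1/q.den for q > 0
lemma rat_ge_inv_den {q : ℚ} (hq : 0 < q) : 1 / (q.den : ℚ) ≤ q := by
  have hd : (0:ℚ) < (q.den : ℚ) := by exact_mod_cast q.pos
  have hn : (1:ℚ) ≤ (q.num : ℚ) := by
    have : 0 < q.num := Rat.num_pos.mpr hq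
    exact_mod_cast this
  calc 1 / (q.den : ℚ) ≤ (q.num : ℚ) / q.den := by gcongr
      _ = q := Rat.num_div_den q

lemma den_sub_dvd (p q : ℚ) : ((p - q).den : ℤ) ∣ ((p.den : ℤ) * (q.den : ℤ)) := by
  have hp : (p.den : ℚ) ≠ 0 := by exact_mod_cast p.den_nz
  have hq : (q.den : ℚ) ≠ 0 := by exact_mod_cast q.den_nz
  have h : p - q = Rat.divInt (p.num * (q.den : ℤ) - q.num * (p.den : ℤ))
      ((p.den : ℤ) * (q.den : ℤ)) := by
    rw [Rat.divInt_eq_div]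
    push_cast
    conv_lhs => rw [← Rat.num_div_den p, ← Rat.num_div_den q]
    rw [div_sub_div _ _ hp hq]
    ring_nf
  rw [h]
  exact Rat.den_dvd _ _

lemma sub_den_le {σ σ' : ℚ} {m : ℕ} (hd : σ.den ≤ m) (hd' : σ'.den ≤ m) :
    ((σ' - σ).den : ℚ) ≤ (m : ℚ) ^ 2 := by
  have hdvd : ((σ' - σ).den : ℤ) ∣ ((σ'.den : ℤ) * (σ.den : ℤ)) := den_sub_dvd σ' σ
  have hdvd' : (σ' - σ).den ∣ σ'.den * σ.den := by exact_mod_cast hdvd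
  have hle : (σ' - σ).den ≤ σ'.den * σ.den :=
    Nat.le_of_dvd (Nat.mul_pos σ'.pos σ.pos) hdvd'
  have : σ'.den * σ.den ≤ m * m := Nat.mul_le_mul hd' hd
  have h2 : (σ' - σ).den ≤ m * m := le_trans hle this
  have := (Nat.cast_le (α := ℚ)).mpr h2
  calc ((σ' - σ).den : ℚ) ≤ ((m * m : ℕ) : ℚ) := this
    _ = (m : ℚ) ^ 2 := by push_cast; ring

lemma sub_ge {σ σ' : ℚ} {m : ℕ} (hm : 1 ≤ m) (h : σ < σ')
    (hd : σ.den ≤ m) (hd' : σ'.den ≤ m) : 1 / (m : ℚ) ^ 2 ≤ σ' - σ := by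
  have h0 : 0 < σ' - σ := sub_pos.mpr h
  have h1 := rat_ge_inv_den h0
  have h2 := sub_den_le (m := m) hd hd'
  have hdpos : (0:ℚ) < ((σ' - σ).den : ℚ) := by exact_mod_cast (σ' - σ).pos
  have : 1 / (m : ℚ) ^ 2 ≤ 1 / ((σ' - σ).den : ℚ) :=
    one_div_le_one_div_of_le hdpos h2
  linarith


lemma two_eps_lt (m : ℕ) (hm : 1 ≤ m) : eps m * m + eps m * m < 1 / (2 * (m:ℚ)^4) := by
  have hm0 : (0:ℚ) < m := by exact_mod_cast hm
  have heps : eps m * (m:ℚ) = 1 / (8*(m:ℚ)^4) := by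
    unfold eps; field_simp
  rw [heps]
  rw [← add_div, div_lt_div_iff₀ (by positivity) (by positivity)]
  nlinarith [pow_pos hm0 4]

lemma Lq_gap (m : ℕ) (hm : 1 ≤ m) {σ σ' : ℚ} (h1 : 1 < σ) (h1' : 1 < σ')
    (h2 : σ ≤ m) (h2' : σ' ≤ m) (hd : σ.den ≤ m) (hd' : σ'.den ≤ m) (hlt : σ < σ') :
    1 / (2 * (m:ℚ)^4) ≤ Lq σ - Lq σ' := by
  have hm0 : (0:ℚ) < m := by exact_mod_cast hm
  have hs1 : (0:ℚ) < σ + 1 := by linarith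
  have hs1' : (0:ℚ) < σ' + 1 := by linarith
  have key : Lq σ - Lq σ' = 2*(σ'-σ)/((σ+1)*(σ'+1)) := by
    unfold Lq
    field_simp
    ring
  have hgap : 1/(m:ℚ)^2 ≤ σ' - σ := sub_ge hm hlt hd hd'
  have hden : (σ+1)*(σ'+1) ≤ 4*(m:ℚ)^2 := by nlinarith
  have hstep : 2*(1/(m:ℚ)^2)/(4*(m:ℚ)^2) ≤ 2*(σ'-σ)/((σ+1)*(σ'+1)) := by
    have hp : (0:ℚ) < 1/(m:ℚ)^2 := by positivity
    apply div_le_div₀ (by linarith) (by linarith) (by positivity) (by nlinarith)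
  have heq : 2*(1/(m:ℚ)^2)/(4*(m:ℚ)^2) = 1/(2*(m:ℚ)^4) := by
    field_simp
    ring
  rw [key]
  linarith

lemma junction_gap (m : ℕ) (hm : 1 ≤ m) {σ : ℚ} (h1 : 1 < σ) (h2 : σ ≤ m)
    (hd : σ.den ≤ m) : 1 / (2 * (m:ℚ)^4) ≤ (2 - Lq σ) - Lq σ := by
  have hm0 : (0:ℚ) < m := by exact_mod_cast hm
  have hs1 : (0:ℚ) < σ + 1 := by linarith
  have key : (2 - Lq σ) - Lq σ = 2*(σ-1)/(σ+1) := by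
    unfold Lq; field_simp; ring
  have hden1 : ((σ - 1).den : ℤ) ∣ (σ.den : ℤ) := by
    have := den_sub_dvd σ 1
    simpa using this
  have hden1' : (σ - 1).den ≤ σ.den := Nat.le_of_dvd σ.pos (by exact_mod_cast hden1)
  have hgap : 1/(m:ℚ) ≤ σ - 1 := by
    have h0 : 0 < σ - 1 := by linarith
    have h1' := rat_ge_inv_den h0
    have hdd : ((σ-1).den : ℚ) ≤ (m:ℚ) := by
      have : (σ-1).den ≤ m := le_trans hden1' hd
      exact_mod_cast this
    have hdpos : (0:ℚ) < ((σ-1).den : ℚ) := by exact_mod_cast (σ-1).pos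
    have : 1/(m:ℚ) ≤ 1/((σ-1).den : ℚ) := one_div_le_one_div_of_le hdpos hdd
    linarith
  have hstep : 2*(1/(m:ℚ))/(2*(m:ℚ)) ≤ 2*(σ-1)/(σ+1) := by
    have hm1 : (1:ℚ) ≤ (m:ℚ) := by exact_mod_cast hm
    have hp : (0:ℚ) < 1/(m:ℚ) := by positivity
    apply div_le_div₀ (by linarith) (by linarith) (by positivity) (by linarith)
  have heq2 : 2*(1/(m:ℚ))/(2*(m:ℚ)) = 1/(m:ℚ)^2 := by field_simp
  have hfin : 1/(2*(m:ℚ)^4) ≤ 1/(m:ℚ)^2 := by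
    have hm1 : (1:ℚ) ≤ (m:ℚ) := by exact_mod_cast hm
    apply one_div_le_one_div_of_le (by positivity)
    nlinarith [pow_pos hm0 2, pow_pos hm0 4, sq_nonneg ((m:ℚ)^2 - 1)]
  rw [key]
  linarith

lemma blk_length (m : ℕ) (b : ℚ × ℕ) : (blk m b).length = b.2 := by
  rw [blk, List.length_map, List.length_range]

lemma blk_ne_nil (m : ℕ) {b : ℚ × ℕ} (hb : 1 ≤ b.2) : blk m b ≠ [] := by
  have := blk_length m b
  intro h
  rw [h] at this
  simp at this
  omega

lemma blk_bounds (m : ℕ) (hm : 1 ≤ m) {b : ℚ × ℕ} (h2 : b.2 ≤ m) {x : ℝ}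
    (hx : x ∈ blk m b) :
    ((b.1 : ℝ)) - ((eps m : ℚ) : ℝ) * m ≤ x ∧ x ≤ ((b.1 : ℝ)) + ((eps m : ℚ) : ℝ) * m := by
  rw [blk] at hx
  obtain ⟨i, hi, rfl⟩ := List.mem_map.mp hx
  rw [List.mem_range] at hi
  have hε : (0:ℝ) < ((eps m : ℚ) : ℝ) := by exact_mod_cast eps_pos m hm
  have hi' : (i : ℝ) ≤ (b.2 : ℝ) - 1 := by
    have : (i : ℝ) + 1 ≤ (b.2 : ℝ) := by exact_mod_cast hi
    linarith
  have hlen : (b.2 : ℝ) ≤ (m : ℝ) := by exact_mod_cast h2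
  have hiz : (0:ℝ) ≤ (i : ℝ) := Nat.cast_nonneg i
  have hub : 2 * (i:ℝ) - ((b.2:ℝ) - 1) ≤ (m : ℝ) := by linarith
  have hlb : -(m : ℝ) ≤ 2 * (i:ℝ) - ((b.2:ℝ) - 1) := by linarith
  constructor
  · nlinarith
  · nlinarith

lemma blk_chain (m : ℕ) (hm : 1 ≤ m) (b : ℚ × ℕ) : (blk m b).Chain' (· < ·) := by
  have hε : (0:ℝ) < ((eps m : ℚ) : ℝ) := by exact_mod_cast eps_pos m hm
  cases hb2 : b.2 with
  | zero => rw [blk, hb2]; simp [List.Chain']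
  | succ n =>
    rw [blk]; simp only [List.Chain']; rw [List.isChain_map, hb2, List.isChain_range_succ]
    intro i hi
    push_cast
    nlinarith

lemma flatten_chain (m : ℕ) (hm : 1 ≤ m) :
    ∀ (L : List (ℚ × ℕ)), (∀ b ∈ L, 1 ≤ b.2 ∧ b.2 ≤ m) → L.Chain' (Cq m) →
      ((L.map (blk m)).flatten).Chain' (· < ·) := by
  intro L
  induction L with
  | nil => simp [List.Chain']
  | cons b L ih =>
    intro hb hc
    simp only [List.Chain'] at hc ⊢
    rw [List.map_cons, List.flatten_cons, List.isChain_append]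
    refine ⟨blk_chain m hm b, ih (fun c hc' => hb c (List.mem_cons_of_mem _ hc')) hc.tail, ?_⟩
    intro x hx y hy
    cases L with
    | nil => simp at hy
    | cons b' L' =>
      rw [List.map_cons, List.flatten_cons,
        List.head?_append_of_ne_nil _ (blk_ne_nil m (hb b' (by simp)).1)] at hy
      have hxm : x ∈ blk m b := List.mem_of_mem_getLast? hx
      have hym : y ∈ blk m b' := List.mem_of_mem_head? hy
      have hCb : Cq m b b' := (List.isChain_cons_cons.mp hc).1
      have hx2 := (blk_bounds m hm (hb b (by simp)).2 hxm).2
      have hy1 := (blk_bounds m hm (hb b' (by simp)).2 hym).1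
      have hcast : ((b.1 : ℝ)) + ((eps m : ℚ):ℝ) * m < ((b'.1 : ℝ)) - ((eps m : ℚ):ℝ) * m := by
        have := hCb
        unfold Cq at this
        have h2 : ((b.1 + eps m * m : ℚ) : ℝ) < ((b'.1 - eps m * m : ℚ) : ℝ) := by
          exact_mod_cast this
        push_cast at h2
        convert h2 using 2 <;> push_cast <;> ring
      linarith

lemma blk_sum (m : ℕ) (b : ℚ × ℕ) (hb : 1 ≤ b.2) :
    (blk m b).sum = (b.2 : ℝ) * ((b.1 : ℚ) : ℝ) := by
  have hbridge : (blk m b).sum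
      = ∑ i ∈ Finset.range b.2, (((b.1 : ℝ)) + ((eps m : ℚ) : ℝ) * (2 * (i:ℝ) - ((b.2:ℝ) - 1))) := by
    rfl
  rw [hbridge, Finset.sum_add_distrib, Finset.sum_const, Finset.card_range, ← Finset.mul_sum]
  have hgauss : ∑ i ∈ Finset.range b.2, (2 * (i:ℝ) - ((b.2:ℝ) - 1))
      = 2 * (∑ i ∈ Finset.range b.2, (i:ℝ)) - (b.2:ℝ) * ((b.2:ℝ) - 1) := by
    rw [Finset.sum_sub_distrib, ← Finset.mul_sum, Finset.sum_const, Finset.card_range]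
    ring
  have hgsum : (∑ i ∈ Finset.range b.2, (i:ℝ)) = (b.2:ℝ) * ((b.2:ℝ) - 1) / 2 := by
    have h := Finset.sum_range_id_mul_two b.2
    have hcast : ((∑ i ∈ Finset.range b.2, i : ℕ) : ℝ) * 2 = (b.2 : ℝ) * ((b.2:ℝ) - 1) := by
      rw [← Nat.cast_ofNat, ← Nat.cast_mul, h]
      have : ((b.2 * (b.2 - 1) : ℕ) : ℝ) = (b.2:ℝ) * ((b.2:ℝ) - 1) := by
        rw [Nat.cast_mul, Nat.cast_sub hb]
        push_cast
        ring
      exact this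
    push_cast at hcast ⊢
    linarith
  rw [hgauss, hgsum]
  ring


def DL (m : ℕ) : List ℝ := ((BD m).map (blk m)).flatten
def P (m : ℕ) (i : ℕ) : ℝ := ((DL m).take i).sum
def nn (m : ℕ) : ℕ := (DL m).length + 1
noncomputable def AA (m : ℕ) : Finset ℝ := (Finset.range (nn m)).image (P m)
def LP (m : ℕ) : List ℝ := (List.range (nn m)).map (P m)

lemma G_facts {m : ℕ} {σ : ℚ} (h : σ ∈ G m) :
    1 < σ ∧ σ ≤ m ∧ 1 ≤ σ.den ∧ σ.den ≤ m ∧ 1 ≤ aN σ ∧ aN σ ≤ m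
      ∧ ((aN σ : ℚ) = (σ.num : ℚ)) := by
  obtain ⟨h1, h2, h3, h4⟩ := mem_G h
  have hnum : 0 < σ.num := Rat.num_pos.mpr (lt_trans one_pos h1)
  have haN : (aN σ : ℤ) = σ.num := Int.toNat_of_nonneg hnum.le
  refine ⟨h1, h2, σ.pos, h3, ?_, ?_, ?_⟩
  · unfold aN; omega
  · unfold aN; omega
  · exact_mod_cast haN

lemma cq_left {m : ℕ} (hm : 1 ≤ m) {σ σ' : ℚ} (hσ : σ ∈ G m) (hσ' : σ' ∈ G m)
    (hlt : σ < σ') : Cq m (Lq σ', aN σ') (Lq σ, aN σ) := by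
  obtain ⟨a1, a2, a3, a4, _, _, _⟩ := G_facts hσ
  obtain ⟨b1, b2, b3, b4, _, _, _⟩ := G_facts hσ'
  have hg := Lq_gap m hm a1 b1 a2 b2 a4 b4 hlt
  have he := two_eps_lt m hm
  unfold Cq
  simp only
  linarith

lemma cq_right {m : ℕ} (hm : 1 ≤ m) {σ σ' : ℚ} (hσ : σ ∈ G m) (hσ' : σ' ∈ G m)
    (hlt : σ < σ') : Cq m (2 - Lq σ, σ.den) (2 - Lq σ', σ'.den) := by
  obtain ⟨a1, a2, a3, a4, _, _, _⟩ := G_facts hσ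
  obtain ⟨b1, b2, b3, b4, _, _, _⟩ := G_facts hσ'
  have hg := Lq_gap m hm a1 b1 a2 b2 a4 b4 hlt
  have he := two_eps_lt m hm
  unfold Cq
  simp only
  linarith

lemma cq_junction {m : ℕ} (hm : 1 ≤ m) {σ : ℚ} (hσ : σ ∈ G m) :
    Cq m (Lq σ, aN σ) (2 - Lq σ, σ.den) := by
  obtain ⟨a1, a2, a3, a4, _, _, _⟩ := G_facts hσ
  have hg := junction_gap m hm a1 a2 a4
  have he := two_eps_lt m hm
  unfold Cq
  simp only
  linarith

lemma pairwise_lis (m : ℕ) :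
    List.Pairwise (fun σ σ' : ℚ => σ ∈ G m ∧ σ' ∈ G m ∧ σ < σ') (lis m) := by
  have hs : List.Pairwise (· < ·) (lis m) := (Finset.sortedLT_sort (G m)).pairwise
  exact hs.imp_of_mem fun ha hb h =>
    ⟨(Finset.mem_sort _).mp ha, (Finset.mem_sort _).mp hb, h⟩

lemma BD_chain {m : ℕ} (hm : 1 ≤ m) : (BD m).Chain' (Cq m) := by
  have hpair := pairwise_lis m
  rw [BD]; simp only [List.Chain']; rw [List.isChain_append]
  refine ⟨?_, ?_, ?_⟩
  · rw [List.isChain_map, List.isChain_reverse]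
    exact (hpair.imp fun h => cq_left hm h.1 h.2.1 h.2.2).isChain
  · rw [List.isChain_map]
    exact (hpair.imp fun h => cq_right hm h.1 h.2.1 h.2.2).isChain
  · intro x hx y hy
    rw [List.getLast?_map, List.getLast?_reverse] at hx
    rw [List.head?_map] at hy
    cases hl : (lis m).head? with
    | none => rw [hl] at hx; simp at hx
    | some σ₀ =>
      rw [hl] at hx hy
      simp only [Option.map_some, Option.mem_def, Option.some.injEq] at hx hy
      subst hx; subst hy
      have hσ₀ : σ₀ ∈ G m := by
        have : σ₀ ∈ lis m := List.mem_of_mem_head? (by rw [hl]; rfl)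
        exact (Finset.mem_sort _).mp this
      exact cq_junction hm hσ₀

lemma mem_BD {m : ℕ} {b : ℚ × ℕ} (hb : b ∈ BD m) :
    ∃ σ ∈ G m, b = (Lq σ, aN σ) ∨ b = (2 - Lq σ, σ.den) := by
  rw [BD, List.mem_append] at hb
  rcases hb with hb | hb
  · obtain ⟨σ, hσ, rfl⟩ := List.mem_map.mp hb
    rw [List.mem_reverse] at hσ
    exact ⟨σ, (Finset.mem_sort _).mp hσ, Or.inl rfl⟩
  · obtain ⟨σ, hσ, rfl⟩ := List.mem_map.mp hb
    exact ⟨σ, (Finset.mem_sort _).mp hσ, Or.inr rfl⟩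

lemma BD_props {m : ℕ} {b : ℚ × ℕ} (hb : b ∈ BD m) :
    2/((m:ℚ)+1) ≤ b.1 ∧ 1 ≤ b.2 ∧ b.2 ≤ m := by
  obtain ⟨σ, hσ, hcase⟩ := mem_BD hb
  obtain ⟨h1, h2, h3, h4, h5, h6, h7⟩ := G_facts hσ
  have hm0 : (0:ℚ) < (m:ℚ) := by
    have : (1:ℚ) < (m:ℚ) := lt_of_lt_of_le h1 h2
    linarith
  have hLq : 2/((m:ℚ)+1) ≤ Lq σ := by
    unfold Lq
    apply div_le_div_of_nonneg_left (by norm_num) (by linarith) (by linarith)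
  have hLq1 : Lq σ ≤ 1 := by
    unfold Lq
    rw [div_le_one (by linarith)]
    linarith
  rcases hcase with rfl | rfl
  · exact ⟨hLq, h5, h6⟩
  · refine ⟨?_, h3, h4⟩
    have : 2/((m:ℚ)+1) ≤ 1 := by
      rw [div_le_one (by linarith)]
      linarith
    simp only
    linarith

lemma DL_chain {m : ℕ} (hm : 1 ≤ m) : (DL m).Chain' (· < ·) :=
  flatten_chain m hm (BD m) (fun b hb => (BD_props hb).2) (BD_chain hm)

lemma DL_pos {m : ℕ} (hm : 1 ≤ m) {x : ℝ} (hx : x ∈ DL m) : 0 < x := by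
  rw [DL, List.mem_flatten] at hx
  obtain ⟨l, hl, hxl⟩ := hx
  obtain ⟨b, hbBD, rfl⟩ := List.mem_map.mp hl
  obtain ⟨hc, hl1, hl2⟩ := BD_props hbBD
  have hb := (blk_bounds m hm hl2 hxl).1
  have hm0 : (0:ℚ) < (m:ℚ) := by exact_mod_cast hm
  have key : 0 < 2/((m:ℚ)+1) - eps m * m := by
    have heps : eps m * (m:ℚ) = 1 / (8*(m:ℚ)^4) := by
      unfold eps; field_simp
    rw [heps]
    have hm1 : (1:ℚ) ≤ (m:ℚ) := by exact_mod_cast hm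
    have h1 : 1/(8*(m:ℚ)^4) < 1/(m:ℚ) := by
      apply one_div_lt_one_div_of_lt hm0
      have ha : (m:ℚ) ≤ (m:ℚ)^2 := by nlinarith
      have hb : (m:ℚ)^2 ≤ (m:ℚ)^4 := by nlinarith [sq_nonneg ((m:ℚ))]
      linarith [pow_pos hm0 4]
    have h2 : 1/(m:ℚ) ≤ 2/((m:ℚ)+1) := by
      rw [div_le_div_iff₀ hm0 (by linarith)]
      linarith
    linarith
  have keyR : (0:ℝ) < ((2/((m:ℚ)+1) - eps m * m : ℚ) : ℝ) := by exact_mod_cast key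
  push_cast at keyR
  have hcR : ((2:ℝ)/((m:ℝ)+1)) ≤ ((b.1 : ℚ) : ℝ) := by
    have : ((2/((m:ℚ)+1) : ℚ) : ℝ) ≤ ((b.1 : ℚ) : ℝ) := by exact_mod_cast hc
    push_cast at this
    linarith
  linarith

lemma P_succ {m : ℕ} {i : ℕ} (h : i < (DL m).length) :
    P m (i+1) = P m i + (DL m)[i] := List.sum_take_succ _ _ h

lemma P_lt {m : ℕ} (hm : 1 ≤ m) {i j : ℕ} (hij : i < j) (hj : j ≤ (DL m).length) :
    P m i < P m j := by
  induction j with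
  | zero => omega
  | succ j ih =>
    have hj' : j < (DL m).length := by omega
    rw [P_succ hj']
    have hpos : 0 < (DL m)[j] := DL_pos hm (List.getElem_mem _)
    rcases Nat.lt_or_ge i j with h | h
    · have := ih h (by omega)
      linarith
    · have : i = j := by omega
      subst this
      linarith

lemma LP_sorted {m : ℕ} (hm : 1 ≤ m) : List.Pairwise (· < ·) (LP m) := by
  rw [LP]
  rw [List.pairwise_map]
  have := List.pairwise_lt_range (n := nn m)
  apply this.imp_of_mem
  intro a b ha hb hab
  rw [List.mem_range] at ha hb
  exact P_lt hm hab (by unfold nn at hb; omega)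

lemma AA_sort {m : ℕ} (hm : 1 ≤ m) : (AA m).sort (· ≤ ·) = LP m := by
  apply List.Perm.eq_of_pairwise' (r := (· ≤ ·)) (Finset.pairwise_sort _ _)
    ((LP_sorted hm).imp le_of_lt)
  apply List.perm_of_nodup_nodup_toFinset_eq (Finset.sort_nodup _ _) (LP_sorted hm).nodup
  rw [Finset.sort_toFinset]
  ext x
  simp only [AA, LP, Finset.mem_image, Finset.mem_range, List.mem_toFinset, List.mem_map,
    List.mem_range]
  try tauto

lemma AA_card {m : ℕ} (hm : 1 ≤ m) : (AA m).card = nn m := by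
  have h1 : ((AA m).sort (· ≤ ·)).length = (AA m).card := Finset.length_sort _
  rw [AA_sort hm] at h1
  rw [← h1, LP, List.length_map, List.length_range]

lemma LP_getD {m : ℕ} {j : ℕ} (hj : j < nn m) : (LP m).getD j 0 = P m j := by
  have hlen : j < (LP m).length := by
    rw [LP, List.length_map, List.length_range]; exact hj
  rw [List.getD_eq_getElem _ _ hlen]
  try simp only [LP, List.getElem_map, List.getElem_range]

lemma AA_convex {m : ℕ} (hm : 1 ≤ m) : IsConvexSet (AA m) := by
  intro i hi
  rw [AA_card hm] at hi
  rw [AA_sort hm]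
  rw [LP_getD (by omega), LP_getD (by omega), LP_getD (by omega)]
  have h1 : i < (DL m).length := by unfold nn at hi; omega
  have h2 : i + 1 < (DL m).length := by unfold nn at hi; omega
  have hchain := DL_chain hm
  simp only [List.Chain'] at hchain; rw [List.isChain_iff_getElem] at hchain
  have hlt := hchain i (by omega)
  have e1 := P_succ (m := m) h1
  have e2 := P_succ (m := m) h2
  rw [show i + 2 = (i+1)+1 from rfl, e2, e1]
  linarith

def lmap (m : ℕ) : List (ℚ × ℕ) := (lis m).reverse.map fun σ => (Lq σ, aN σ)
def rmap (m : ℕ) : List (ℚ × ℕ) := (lis m).map fun σ => (2 - Lq σ, σ.den)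
def KK (m : ℕ) : ℕ := (lis m).length
noncomputable def hval (σ : ℚ) : ℝ := (aN σ : ℝ) * ((Lq σ : ℚ) : ℝ)
def qpos (m : ℕ) (i : ℕ) : ℕ := (((lmap m).take i).map Prod.snd).sum
def ppos (m : ℕ) (i : ℕ) : ℕ :=
  ((lmap m).map Prod.snd).sum + (((rmap m).take (KK m - i)).map Prod.snd).sum

lemma BD_eq (m : ℕ) : BD m = lmap m ++ rmap m := rfl

lemma blocks_flatten_length (m : ℕ) (Lb : List (ℚ × ℕ)) :
    ((Lb.map (blk m)).flatten).length = (Lb.map Prod.snd).sum := by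
  rw [List.length_flatten, List.map_map]
  congr 1
  apply List.map_congr_left
  intro b _
  exact blk_length m b

lemma take_flatten (L : List (List ℝ)) (rest : List ℝ) (i : ℕ) :
    (L.flatten ++ rest).take ((L.take i).flatten.length) = (L.take i).flatten := by
  have h1 : (L.take i).flatten <+: L.flatten := by
    refine ⟨(L.drop i).flatten, ?_⟩
    rw [← List.flatten_append, List.take_append_drop]
  have h2 : (L.take i).flatten <+: L.flatten ++ rest := h1.trans (List.prefix_append _ _)
  exact (List.prefix_iff_eq_take.mp h2).symm

lemma blocks_take_sum (m : ℕ) (Lb : List (ℚ × ℕ)) (rest : List ℝ) (i : ℕ)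
    (hlen : ∀ b ∈ Lb, 1 ≤ b.2) :
    ((((Lb.map (blk m)).flatten) ++ rest).take (((Lb.take i).map Prod.snd).sum)).sum
      = ((Lb.take i).map (fun b => (b.2 : ℝ) * ((b.1 : ℚ) : ℝ))).sum := by
  have hlength : (((Lb.map (blk m)).take i).flatten).length
      = ((Lb.take i).map Prod.snd).sum := by
    rw [← List.map_take]
    exact blocks_flatten_length m (Lb.take i)
  rw [← hlength, take_flatten]
  rw [List.sum_flatten, ← List.map_take, List.map_map]
  apply congrArg
  apply List.map_congr_left
  intro b hb
  exact blk_sum m b (hlen b (List.mem_of_mem_take hb))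

lemma lmap_snd (m : ℕ) {b : ℚ × ℕ} (hb : b ∈ lmap m) : 1 ≤ b.2 := by
  rw [lmap] at hb
  obtain ⟨σ, hσ, rfl⟩ := List.mem_map.mp hb
  rw [List.mem_reverse] at hσ
  exact (G_facts ((Finset.mem_sort _).mp hσ)).2.2.2.2.1

lemma rmap_snd (m : ℕ) {b : ℚ × ℕ} (hb : b ∈ rmap m) : 1 ≤ b.2 := by
  rw [rmap] at hb
  obtain ⟨σ, hσ, rfl⟩ := List.mem_map.mp hb
  exact (G_facts ((Finset.mem_sort _).mp hσ)).2.2.1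

lemma hval_right {m : ℕ} {σ : ℚ} (hσ : σ ∈ G m) :
    ((σ.den : ℕ) : ℝ) * (((2 - Lq σ) : ℚ) : ℝ) = hval σ := by
  obtain ⟨h1, _, _, _, _, _, h7⟩ := G_facts hσ
  have hs1 : σ + 1 ≠ 0 := by
    intro h
    have : σ = -1 := by linarith
    rw [this] at h1
    norm_num at h1
  have hq : (σ.den : ℚ) * (2 - Lq σ) = (aN σ : ℚ) * Lq σ := by
    rw [h7]
    unfold Lq
    have hden : σ * (σ.den : ℚ) = (σ.num : ℚ) := by exact_mod_cast Rat.mul_den_eq_num σ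
    field_simp
    linear_combination hden
  unfold hval
  have := congrArg (fun q : ℚ => (q : ℝ)) hq
  push_cast at this ⊢
  linarith

lemma P_qpos (m : ℕ) (i : ℕ) :
    P m (qpos m i) = (((lis m).reverse.take i).map hval).sum := by
  unfold P qpos
  have hDL : DL m = ((lmap m).map (blk m)).flatten ++ ((rmap m).map (blk m)).flatten := by
    rw [DL, BD_eq, List.map_append, List.flatten_append]
  rw [hDL, blocks_take_sum m (lmap m) _ i (fun b hb => lmap_snd m hb)]
  rw [lmap, ← List.map_take, List.map_map]
  apply congrArg
  apply List.map_congr_left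
  intro σ _
  rfl

lemma P_ppos (m : ℕ) (i : ℕ) :
    P m (ppos m i) = ((lis m).map hval).sum + (((lis m).take (KK m - i)).map hval).sum := by
  unfold P ppos
  have hDL : DL m = ((lmap m).map (blk m)).flatten ++ ((rmap m).map (blk m)).flatten := by
    rw [DL, BD_eq, List.map_append, List.flatten_append]
  rw [hDL]
  have hlflat : (((lmap m).map (blk m)).flatten).length = ((lmap m).map Prod.snd).sum :=
    blocks_flatten_length m (lmap m)
  rw [← hlflat, List.take_length_add_append, List.sum_append]
  congr 1
  · -- full left sum equals sum over lis of hval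
    have h1 : (((lmap m).map (blk m)).flatten).sum
        = ((lmap m).map (fun b => (b.2 : ℝ) * ((b.1 : ℚ) : ℝ))).sum := by
      rw [List.sum_flatten, List.map_map]
      apply congrArg
      apply List.map_congr_left
      intro b hb
      exact blk_sum m b (lmap_snd m hb)
    rw [h1, lmap, List.map_map]
    have h2 : ((lis m).reverse.map (((fun b : ℚ × ℕ => (b.2 : ℝ) * ((b.1 : ℚ) : ℝ)) ∘
        fun σ => (Lq σ, aN σ)))).sum = ((lis m).reverse.map hval).sum := by
      apply congrArg
      apply List.map_congr_left
      intro σ _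
      rfl
    rw [h2, List.map_reverse, List.sum_reverse]
  · have h3 := blocks_take_sum m (rmap m) [] (KK m - i) (fun b hb => rmap_snd m hb)
    rw [List.append_nil] at h3
    rw [h3, rmap, ← List.map_take, List.map_map]
    apply congrArg
    apply List.map_congr_left
    intro σ hσ
    have hσG : σ ∈ G m := (Finset.mem_sort _).mp (List.mem_of_mem_take hσ)
    exact hval_right hσG

lemma pair_sum (m : ℕ) (i : ℕ) (hi : i ≤ KK m) :
    P m (qpos m i) + P m (ppos m i) = ((lis m).map hval).sum + ((lis m).map hval).sum := by
  rw [P_qpos, P_ppos]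
  have key : (((lis m).reverse.take i).map hval).sum
      + (((lis m).take (KK m - i)).map hval).sum = ((lis m).map hval).sum := by
    rw [List.take_reverse, List.map_reverse, List.sum_reverse]
    have hlen : (lis m).length - i = KK m - i := rfl
    rw [hlen]
    conv_rhs => rw [← List.take_append_drop (KK m - i) (lis m)]
    rw [List.map_append, List.sum_append]
    ring
  linarith

noncomputable def xval (m : ℕ) : ℝ := ((lis m).map hval).sum + ((lis m).map hval).sum

lemma lmap_length (m : ℕ) : (lmap m).length = KK m := by
  rw [lmap, List.length_map, List.length_reverse]; rfl

lemma rmap_length (m : ℕ) : (rmap m).length = KK m := by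
  rw [rmap, List.length_map]; rfl

lemma DL_length (m : ℕ) :
    (DL m).length = ((lmap m).map Prod.snd).sum + ((rmap m).map Prod.snd).sum := by
  rw [DL, blocks_flatten_length, BD_eq, List.map_append, List.sum_append]

lemma take_sum_le (l : List ℕ) (j : ℕ) : (l.take j).sum ≤ l.sum := by
  conv_rhs => rw [← List.take_append_drop j l]
  rw [List.sum_append]
  omega

lemma qpos_succ (m : ℕ) {i : ℕ} (hi : i < KK m) :
    qpos m i < qpos m (i + 1) := by
  unfold qpos
  rw [List.map_take, List.map_take]
  have hlen : i < ((lmap m).map Prod.snd).length := by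
    rw [List.length_map, lmap_length]; exact hi
  rw [List.sum_take_succ _ i hlen]
  have hmem : ((lmap m).map Prod.snd)[i] ∈ (lmap m).map Prod.snd := List.getElem_mem _
  obtain ⟨b, hb, hbe⟩ := List.mem_map.mp hmem
  have := lmap_snd m hb
  omega

lemma qpos_mono (m : ℕ) {i j : ℕ} (hij : i < j) (hj : j ≤ KK m) :
    qpos m i < qpos m j := by
  induction j with
  | zero => omega
  | succ j ih =>
    have hj' : j < KK m := by omega
    rcases Nat.lt_or_ge i j with h | h
    · exact lt_trans (ih h (by omega)) (qpos_succ m hj')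
    · have : i = j := by omega
      subst this
      exact qpos_succ m hj'

lemma qpos_le_left (m : ℕ) {i : ℕ} (hi : i ≤ KK m) :
    qpos m i ≤ ((lmap m).map Prod.snd).sum := by
  unfold qpos
  rw [List.map_take]
  exact take_sum_le _ _

lemma ppos_le (m : ℕ) (i : ℕ) : ppos m i ≤ (DL m).length := by
  rw [DL_length]
  unfold ppos
  have := take_sum_le ((rmap m).map Prod.snd) (KK m - i)
  rw [List.map_take] at *
  omega

lemma qpos_in_range (m : ℕ) {i : ℕ} (hi : i ≤ KK m) : qpos m i < nn m := by
  have h1 := qpos_le_left m hi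
  have h2 : ((lmap m).map Prod.snd).sum ≤ (DL m).length := by
    rw [DL_length]; omega
  unfold nn
  omega

lemma ppos_in_range (m : ℕ) (i : ℕ) : ppos m i < nn m := by
  have := ppos_le m i
  unfold nn
  omega

set_option maxHeartbeats 1000000 in
lemma card_filter_ge (m : ℕ) (hm : 1 ≤ m) :
    (KK m + 1 : ℕ) ≤ (((AA m) ×ˢ (AA m)).filter fun p => p.1 + p.2 = xval m).card := by
  classical
  set F := ((AA m) ×ˢ (AA m)).filter fun p => p.1 + p.2 = xval m with hF
  set emb : ℕ → ℝ × ℝ := fun i => (P m (qpos m i), P m (ppos m i)) with hemb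
  have hsub : (Finset.range (KK m + 1)).image emb ⊆ F := by
    intro p hp
    obtain ⟨i, hi, rfl⟩ := Finset.mem_image.mp hp
    rw [Finset.mem_range] at hi
    have hiK : i ≤ KK m := by omega
    rw [hF, Finset.mem_filter, Finset.mem_product]
    refine ⟨⟨?_, ?_⟩, ?_⟩
    · exact Finset.mem_image.mpr ⟨qpos m i, Finset.mem_range.mpr (qpos_in_range m hiK), rfl⟩
    · exact Finset.mem_image.mpr ⟨ppos m i, Finset.mem_range.mpr (ppos_in_range m i), rfl⟩
    · exact pair_sum m i hiK
  have hinj : Set.InjOn emb (Finset.range (KK m + 1)) := by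
    intro i hi j hj hij
    rw [Finset.coe_range, Set.mem_Iio] at hi hj
    by_contra hne
    have key : ∀ a b : ℕ, a < b → b ≤ KK m → emb a ≠ emb b := by
      intro a b hab hbK
      have hq := qpos_mono m hab hbK
      have hPab : P m (qpos m a) < P m (qpos m b) := by
        apply P_lt hm hq
        have := qpos_le_left m hbK
        rw [DL_length]
        omega
      intro h
      have := congrArg Prod.fst h
      simp only [hemb] at this
      linarith
    rcases Nat.lt_trichotomy i j with h | h | h
    · exact key i j h (by omega) hij
    · exact hne h
    · exact key j i h (by omega) hij.symm
  calc KK m + 1 = (Finset.range (KK m + 1)).card := (Finset.card_range _).symm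
    _ = ((Finset.range (KK m + 1)).image emb).card := (Finset.card_image_of_injOn hinj).symm
    _ ≤ F.card := Finset.card_le_card hsub

lemma G_card (m : ℕ) : (G m).card = (SS m).card := by
  rw [G]
  apply Finset.card_image_of_injOn
  rintro ⟨a, b⟩ ha ⟨c, d⟩ hc h
  simp only [SS, Tri, Finset.coe_filter, Set.mem_setOf_eq, Finset.mem_filter,
    Finset.mem_product, Finset.mem_Icc] at ha hc
  obtain ⟨⟨⟨⟨ha1, ham⟩, hb1, hbm⟩, hba⟩, hcop⟩ := ha
  obtain ⟨⟨⟨⟨hc1, hcm⟩, hd1, hdm⟩, hdc⟩, hcop'⟩ := hc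
  simp only at h
  have hb0 : ((b:ℚ)) ≠ 0 := by positivity
  have hd0 : ((d:ℚ)) ≠ 0 := by positivity
  rw [div_eq_div_iff hb0 hd0] at h
  have hnat : a * d = c * b := by exact_mod_cast h
  have hac : a ∣ c := hcop.dvd_of_dvd_mul_right ⟨d, by omega⟩
  have hca : c ∣ a := hcop'.dvd_of_dvd_mul_right ⟨b, by omega⟩
  have haec : a = c := Nat.dvd_antisymm hac hca
  subst haec
  have : d = b := by
    have ha0 : 0 < a := by omega
    exact Nat.eq_of_mul_eq_mul_left ha0 (by omega)
  subst this
  rfl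

lemma KK_eq (m : ℕ) : KK m = (SS m).card := by
  rw [KK, lis, Finset.length_sort, G_card]

lemma KK_le (m : ℕ) : KK m ≤ m * m := by
  rw [KK_eq]
  calc (SS m).card ≤ (Tri m).card := Finset.card_filter_le _ _
    _ ≤ ((Finset.Icc 1 m) ×ˢ (Finset.Icc 1 m)).card := Finset.card_filter_le _ _
    _ = m * m := by
        rw [Finset.card_product, Nat.card_Icc]
        have h : m + 1 - 1 = m := by omega
        rw [h]

lemma length_le_sum (l : List ℕ) (h : ∀ x ∈ l, 1 ≤ x) : l.length ≤ l.sum := by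
  induction l with
  | nil => simp
  | cons a l ih =>
    simp only [List.length_cons, List.sum_cons]
    have h1 := h a (by simp)
    have h2 := ih fun x hx => h x (List.mem_cons_of_mem _ hx)
    omega

lemma DL_length_lb (m : ℕ) : 2 * KK m ≤ (DL m).length := by
  rw [DL_length]
  have h1 := length_le_sum ((lmap m).map Prod.snd) (by
    intro x hx
    obtain ⟨b, hb, rfl⟩ := List.mem_map.mp hx
    exact lmap_snd m hb)
  have h2 := length_le_sum ((rmap m).map Prod.snd) (by
    intro x hx
    obtain ⟨b, hb, rfl⟩ := List.mem_map.mp hx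
    exact rmap_snd m hb)
  rw [List.length_map, lmap_length] at h1
  rw [List.length_map, rmap_length] at h2
  omega

lemma DL_length_ub (m : ℕ) : (DL m).length ≤ 2 * (KK m) * m := by
  rw [DL_length]
  have h1 : ((lmap m).map Prod.snd).sum ≤ ((lmap m).map Prod.snd).length * m := by
    apply List.sum_le_card_nsmul
    intro x hx
    obtain ⟨b, hb, rfl⟩ := List.mem_map.mp hx
    obtain ⟨σ, hσ, rfl⟩ := List.mem_map.mp (by rw [lmap] at hb; exact hb)
    rw [List.mem_reverse] at hσ
    exact (G_facts ((Finset.mem_sort _).mp hσ)).2.2.2.2.2.1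
  have h2 : ((rmap m).map Prod.snd).sum ≤ ((rmap m).map Prod.snd).length * m := by
    apply List.sum_le_card_nsmul
    intro x hx
    obtain ⟨b, hb, rfl⟩ := List.mem_map.mp hx
    obtain ⟨σ, hσ, rfl⟩ := List.mem_map.mp (by rw [rmap] at hb; exact hb)
    exact (G_facts ((Finset.mem_sort _).mp hσ)).2.2.2.1
  rw [List.length_map, lmap_length] at h1
  rw [List.length_map, rmap_length] at h2
  try simp only [smul_eq_mul] at h1 h2
  calc ((lmap m).map Prod.snd).sum + ((rmap m).map Prod.snd).sum
      ≤ KK m * m + KK m * m := Nat.add_le_add h1 h2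
    _ = 2 * KK m * m := by ring

set_option maxHeartbeats 1000000 in
lemma final_ineq (m : ℕ) (hm8 : 8 ≤ m) :
    (1/17 : ℝ) * ((nn m : ℝ)) ^ (2/3 : ℝ) ≤ (KK m : ℝ) + 1 := by
  have hm : 1 ≤ m := by omega
  have hm2 : 2 ≤ m := by omega
  have hmr : (8:ℝ) ≤ (m:ℝ) := by exact_mod_cast hm8
  have hm0 : (0:ℝ) < (m:ℝ) := by linarith
  have hK : (m:ℝ)^2/8 ≤ (KK m : ℝ) := by
    rw [KK_eq]
    exact SS_card m hm2
  have hnnub : (nn m : ℝ) ≤ 2*(m:ℝ)^3 + 1 := by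
    have h1 : nn m ≤ 2 * (m*m) * m + 1 := by
      have := DL_length_ub m
      have h2 := KK_le m
      unfold nn
      have h4 : 2 * KK m ≤ 2 * (m*m) := by omega
      have h3 : 2 * KK m * m ≤ 2 * (m*m) * m := Nat.mul_le_mul h4 (le_refl m)
      omega
    have := (Nat.cast_le (α := ℝ)).mpr h1
    push_cast at this
    nlinarith
  set k := (KK m : ℝ) with hk
  set n := (nn m : ℝ) with hn
  have hn0 : (0:ℝ) ≤ n := Nat.cast_nonneg _
  have hk0 : (0:ℝ) ≤ k := Nat.cast_nonneg _
  have hB0 : (0:ℝ) ≤ 17*(k+1) := by linarith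
  have key : n^(2:ℕ) ≤ (17*(k+1))^(3:ℕ) := by
    have h1 : n ≤ 3*(m:ℝ)^3 := by nlinarith [pow_pos hm0 3]
    have h2 : n^2 ≤ 9*(m:ℝ)^6 := by nlinarith [pow_pos hm0 3]
    have h3 : (17/8:ℝ)*(m:ℝ)^2 ≤ 17*(k+1) := by linarith
    have h4 : ((17/8:ℝ)*(m:ℝ)^2)^3 ≤ (17*(k+1))^3 := by
      apply pow_le_pow_left₀ (by positivity) h3
    have h5 : (9:ℝ)*(m:ℝ)^6 ≤ ((17/8:ℝ)*(m:ℝ)^2)^3 := by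
      have : ((17/8:ℝ)*(m:ℝ)^2)^3 = (4913/512)*(m:ℝ)^6 := by ring
      rw [this]
      nlinarith [pow_pos hm0 6]
    calc n^2 ≤ 9*(m:ℝ)^6 := h2
      _ ≤ ((17/8:ℝ)*(m:ℝ)^2)^3 := h5
      _ ≤ (17*(k+1))^3 := h4
  have e1 : n^(2/3:ℝ) = (n^(2:ℕ))^((1:ℝ)/3) := by
    rw [← Real.rpow_natCast n 2, ← Real.rpow_mul hn0]
    norm_num
  have e2 : (17*(k+1) : ℝ) = ((17*(k+1))^(3:ℕ))^((1:ℝ)/3) := by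
    rw [← Real.rpow_natCast (17*(k+1)) 3, ← Real.rpow_mul hB0]
    norm_num
  have hmono : (n^(2:ℕ))^((1:ℝ)/3) ≤ ((17*(k+1))^(3:ℕ))^((1:ℝ)/3) :=
    Real.rpow_le_rpow (by positivity) key (by norm_num)
  have hfin : n^(2/3:ℝ) ≤ 17*(k+1) := by
    rw [e1]
    calc (n^(2:ℕ))^((1:ℝ)/3) ≤ ((17*(k+1))^(3:ℕ))^((1:ℝ)/3) := hmono
      _ = 17*(k+1) := e2.symm
  linarith

lemma m_le_KK (m : ℕ) (hm8 : 8 ≤ m) : m ≤ KK m := by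
  have hm2 : 2 ≤ m := by omega
  have hK : (m:ℝ)^2/8 ≤ (KK m : ℝ) := by
    rw [KK_eq]; exact SS_card m hm2
  have hmr : (8:ℝ) ≤ (m:ℝ) := by exact_mod_cast hm8
  have : (m:ℝ) ≤ (KK m : ℝ) := by nlinarith
  exact_mod_cast this

end ConvexCons

/-- There are arbitrarily large convex sets `A ⊆ ℝ` and reals `x` with
`r_{A+A}(x) ≥ c·|A|^{2/3}`, where `r_{A+A}(x) = #{(a,b) ∈ A × A : a + b = x}`. -/
theorem convex_set_with_popular_sum :
    ∃ c : ℝ, 0 < c ∧ ∀ N : ℕ, ∃ A : Finset ℝ,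
      IsConvexSet A ∧ N ≤ A.card ∧ ∃ x : ℝ,
        c * (A.card : ℝ) ^ (2 / 3 : ℝ) ≤
          (((A ×ˢ A).filter fun p => p.1 + p.2 = x).card : ℝ) := by
  refine ⟨1/17, by norm_num, fun N => ?_⟩
  set m := N + 8 with hm_def
  have hm8 : 8 ≤ m := by omega
  have hm : 1 ≤ m := by omega
  refine ⟨ConvexCons.AA m, ConvexCons.AA_convex hm, ?_, ConvexCons.xval m, ?_⟩
  · rw [ConvexCons.AA_card hm]
    have h1 := ConvexCons.m_le_KK m hm8
    have h2 := ConvexCons.DL_length_lb m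
    unfold ConvexCons.nn
    omega
  · rw [ConvexCons.AA_card hm]
    have h1 := ConvexCons.final_ineq m hm8
    have h2 := ConvexCons.card_filter_ge m hm
    have h2' : ((ConvexCons.KK m : ℝ)) + 1 ≤
        (((ConvexCons.AA m ×ˢ ConvexCons.AA m).filter
          fun p => p.1 + p.2 = ConvexCons.xval m).card : ℝ) := by
      exact_mod_cast h2
    linarith
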